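/- Let M be a right R-module such that for every endomorphism f : M → M one has M = ker f ⊕ im f (internal direct sum). Then the endomorphism ring End_R(M) is strongly regular. -/

import Mathlib

/-- If `M = ker f ⊕ im f` (internal direct sum) for every endomorphism `f` of `M`,
then the endomorphism ring of `M` is strongly regular. -/
theorem stmt_4 (R M : Type*) [Ring R] [AddCommGroup M] [Module R M]
    (h : ∀ f : Module.End R M,
      LinearMap.ker f ⊓ LinearMap.range f = ⊥ ∧
        LinearMap.ker f ⊔ LinearMap.range f = ⊤) :
    ∀ a : Module.End R M, ∃ b : Module.End R M, a = a ^ 2 * b := by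
  intro a
  obtain ⟨h1, h2⟩ := h a
  obtain ⟨h1', h2'⟩ := h (a * a)
  have hker : LinearMap.ker (a * a) = LinearMap.ker a := by
    refine le_antisymm (fun x hx => ?_) (fun x hx => ?_)
    · have hmem : a x ∈ LinearMap.ker a ⊓ LinearMap.range a :=
        ⟨by simpa [Module.End.mul_apply] using hx, ⟨x, rfl⟩⟩
      rw [h1] at hmem
      simpa using hmem
    · simp only [LinearMap.mem_ker] at hx ⊢
      simp [Module.End.mul_apply, hx]
  have hr2 : LinearMap.range (a * a) ≤ LinearMap.range a := by
    rintro _ ⟨x, rfl⟩; exact ⟨a x, rfl⟩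
  have hrange : LinearMap.range a = LinearMap.range (a * a) := by
    have htop : LinearMap.range (a * a) ⊔ LinearMap.ker a = ⊤ := by
      rw [← hker, sup_comm]; exact h2'
    have := sup_inf_assoc_of_le (LinearMap.ker a) hr2
    rw [htop, top_inf_eq, h1, sup_bot_eq] at this
    exact this
  have hc : IsCompl (LinearMap.ker a) (LinearMap.range a) :=
    ⟨disjoint_iff.mpr h1, codisjoint_iff.mpr h2⟩
  have hmap : ∀ x ∈ LinearMap.range a, a x ∈ LinearMap.range a := by
    rintro _ ⟨x, rfl⟩; exact ⟨a x, rfl⟩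
  set restr := a.restrict hmap with hrestr
  have hinj : Function.Injective restr := by
    intro x y hxy
    have hav : a (x : M) = a (y : M) := by
      simpa [hrestr, LinearMap.restrict_apply] using congrArg Subtype.val hxy
    have : a ((x : M) - (y : M)) = 0 := by rw [map_sub, hav, sub_self]
    have hmem : ((x : M) - y) ∈ LinearMap.ker a ⊓ LinearMap.range a :=
      ⟨this, sub_mem x.2 y.2⟩
    rw [h1] at hmem
    exact Subtype.ext (by simpa [sub_eq_zero] using hmem)
  have hsurj : Function.Surjective restr := by
    rintro ⟨v, hv⟩
    rw [hrange] at hv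
    obtain ⟨y, hy⟩ := hv
    refine ⟨⟨a y, ⟨y, rfl⟩⟩, Subtype.ext ?_⟩
    simpa [hrestr, LinearMap.restrict_apply, Module.End.mul_apply] using hy
  let e := LinearEquiv.ofBijective restr ⟨hinj, hsurj⟩
  let proj := (LinearMap.range a).linearProjOfIsCompl (LinearMap.ker a) hc.symm
  refine ⟨(LinearMap.range a).subtype ∘ₗ (e.symm : LinearMap.range a →ₗ[R] LinearMap.range a) ∘ₗ proj, ?_⟩
  ext x
  have hx : a ((e.symm (proj x) : M)) = (proj x : M) := by
    have := e.apply_symm_apply (proj x)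
    have := congrArg Subtype.val this
    simp only [e, LinearEquiv.ofBijective_apply, LinearMap.restrict_apply] at this
    exact this
  have hx2 : a ((proj x : M)) = a x := by
    have hdecomp : (proj x : M) + ((LinearMap.ker a).linearProjOfIsCompl (LinearMap.range a) hc x : M) = x := by
      exact Submodule.projection_add_projection_eq_self hc.symm x
    have hk : ((LinearMap.ker a).linearProjOfIsCompl (LinearMap.range a) hc x : M) ∈ LinearMap.ker a :=
      ((LinearMap.ker a).linearProjOfIsCompl (LinearMap.range a) hc x).2
    calc a ((proj x : M)) = a ((proj x : M)) + a (((LinearMap.ker a).linearProjOfIsCompl (LinearMap.range a) hc x : M)) := by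
          rw [LinearMap.mem_ker.mp hk, add_zero]
      _ = a x := by rw [← map_add]; exact congrArg a hdecomp
  simp only [Module.End.mul_apply, pow_two, LinearMap.comp_apply, Submodule.coe_subtype,
    LinearEquiv.coe_coe]
  rw [hx, hx2]
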